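/- Let μ, ν : ℕ → ℝ be probability mass functions (nonnegative, summing to 1). Fix K ∈ ℕ, observations y_1, …, y_K ∈ ℕ, and detection probabilities ρ_1, …, ρ_K ∈ (0, 1). Define sequences recursively: α_0(n) = 1 if n = 0 and 0 otherwise; for k = 1, …, K: γ_k(n) = Σ_{m=0}^∞ α_{k−1}(m) · (μ^{∗m} ∗ ν)(n), and α_k(n) = C(n, y_k) · ρ_k^{y_k} · (1−ρ_k)^{n−y_k} · γ_k(n) for n ≥ y_k, with α_k(n) = 0 for n < y_k. Then for every k ∈ {0, …, K}, the sequence α_k is summable with Σ_{n=0}^∞ α_k(n) ≤ 1, and for every k ∈ {1, …, K}, the sequence γ_k is summable with Σ_{n=0}^∞ γ_k(n) ≤ 1. -/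
import Mathlib


/-- Convolution of two sequences: `(a ∗ b)(n) = Σ_{j=0}^{n} a(j) b(n−j)`. -/
noncomputable def seqConv (a b : ℕ → ℝ) (n : ℕ) : ℝ :=
  ∑ j ∈ Finset.range (n + 1), a j * b (n - j)

/-- `m`-fold convolution power: `μ^{∗0} = δ₀` and `μ^{∗(m+1)} = μ^{∗m} ∗ μ`. -/
noncomputable def convPow (μ : ℕ → ℝ) : ℕ → ℕ → ℝ
  | 0 => fun n => if n = 0 then 1 else 0
  | m + 1 => seqConv (convPow μ m) μ

/-- Forward messages of the integer HMM: `(fwd μ ν y ρ k).1 = α_k` and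
`(fwd μ ν y ρ k).2 = γ_k` (the second component at `k = 0` is a dummy).
`α₀ = δ₀`; `γ_k(n) = Σₘ α_{k−1}(m) (μ^{∗m} ∗ ν)(n)`; and
`α_k(n) = C(n, y_k) ρ_k^{y_k} (1−ρ_k)^{n−y_k} γ_k(n)` for `n ≥ y_k`, else `0`. -/
noncomputable def fwd (μ ν : ℕ → ℝ) (y : ℕ → ℕ) (ρ : ℕ → ℝ) : ℕ → (ℕ → ℝ) × (ℕ → ℝ)
  | 0 => (fun n => if n = 0 then 1 else 0, fun _ => 0)
  | k + 1 =>
    let γ : ℕ → ℝ := fun n => ∑' m : ℕ, (fwd μ ν y ρ k).1 m * seqConv (convPow μ m) ν n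
    (fun n =>
      if y (k + 1) ≤ n then
        (n.choose (y (k + 1)) : ℝ) * ρ (k + 1) ^ (y (k + 1)) *
          (1 - ρ (k + 1)) ^ (n - y (k + 1)) * γ n
      else 0,
     γ)

lemma seqConv_nonneg {a b : ℕ → ℝ} (ha : ∀ n, 0 ≤ a n) (hb : ∀ n, 0 ≤ b n) (n : ℕ) :
    0 ≤ seqConv a b n :=
  Finset.sum_nonneg fun j _ => mul_nonneg (ha j) (hb _)

lemma seqConv_summable {a b : ℕ → ℝ} (ha : ∀ n, 0 ≤ a n) (hb : ∀ n, 0 ≤ b n)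
    (hsa : Summable a) (hsb : Summable b) :
    Summable (seqConv a b) ∧ ∑' n, seqConv a b n = (∑' n, a n) * (∑' n, b n) := by
  have hna : Summable fun n => ‖a n‖ := by
    simpa [Real.norm_of_nonneg (ha _)] using hsa
  have hnb : Summable fun n => ‖b n‖ := by
    simpa [Real.norm_of_nonneg (hb _)] using hsb
  constructor
  · exact (summable_norm_sum_mul_range_of_summable_norm hna hnb).of_norm
  · exact (tsum_mul_tsum_eq_tsum_sum_range_of_summable_norm hna hnb).symm

lemma convPow_nonneg {μ : ℕ → ℝ} (hμ : ∀ n, 0 ≤ μ n) (m n : ℕ) : 0 ≤ convPow μ m n := by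
  induction m generalizing n with
  | zero => simp [convPow]; positivity
  | succ m ih => exact seqConv_nonneg ih hμ n

lemma convPow_summable {μ : ℕ → ℝ} (hμ : ∀ n, 0 ≤ μ n) (hs : Summable μ)
    (h1 : ∑' n, μ n ≤ 1) (m : ℕ) :
    Summable (convPow μ m) ∧ ∑' n, convPow μ m n ≤ 1 := by
  induction m with
  | zero =>
    constructor
    · refine summable_of_ne_finset_zero (s := {0}) ?_
      intro n hn
      simp only [Finset.mem_singleton] at hn
      simp [convPow, hn]
    · rw [show convPow μ 0 = fun n => if n = 0 then (1:ℝ) else 0 from rfl,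
        tsum_eq_single 0 (by intro n hn; simp [hn])]
      simp
  | succ m ih =>
    obtain ⟨hsum, hle⟩ := ih
    obtain ⟨hs', heq⟩ := seqConv_summable (convPow_nonneg hμ m) hμ hsum hs
    refine ⟨hs', ?_⟩
    rw [show convPow μ (m+1) = seqConv (convPow μ m) μ from rfl, heq]
    have h0 : 0 ≤ ∑' n, convPow μ m n := tsum_nonneg (convPow_nonneg hμ m)
    have h0' : 0 ≤ ∑' n, μ n := tsum_nonneg hμ
    calc (∑' n, convPow μ m n) * ∑' n, μ n ≤ 1 * 1 := by
          exact mul_le_mul hle h1 h0' zero_le_one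
      _ = 1 := by ring

/-- The forward messages are summable with total mass at most `1`: for `k ≤ K`,
`Σₙ α_k(n) ≤ 1`, and for `1 ≤ k ≤ K`, `Σₙ γ_k(n) ≤ 1`. -/
theorem forward_messages_mass_le_one
    (μ : ℕ → ℝ) (hμnn : ∀ j, 0 ≤ μ j) (hμsum : ∑' j : ℕ, μ j = 1)
    (ν : ℕ → ℝ) (hνnn : ∀ l, 0 ≤ ν l) (hνsum : ∑' l : ℕ, ν l = 1)
    (K : ℕ) (y : ℕ → ℕ) (ρ : ℕ → ℝ)
    (hρ : ∀ k, 1 ≤ k → k ≤ K → ρ k ∈ Set.Ioo (0 : ℝ) 1) :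
    (∀ k ≤ K, Summable (fwd μ ν y ρ k).1 ∧ ∑' n : ℕ, (fwd μ ν y ρ k).1 n ≤ 1) ∧
    (∀ k, 1 ≤ k → k ≤ K →
      Summable (fwd μ ν y ρ k).2 ∧ ∑' n : ℕ, (fwd μ ν y ρ k).2 n ≤ 1) := by
  have hμS : Summable μ := by
    by_contra h; rw [tsum_eq_zero_of_not_summable h] at hμsum; norm_num at hμsum
  have hνS : Summable ν := by
    by_contra h; rw [tsum_eq_zero_of_not_summable h] at hνsum; norm_num at hνsum
  -- c m := μ^{*m} ∗ ν : nonneg, summable, mass ≤ 1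
  set c : ℕ → ℕ → ℝ := fun m => seqConv (convPow μ m) ν with hc
  have hcnn : ∀ m n, 0 ≤ c m n := fun m n =>
    seqConv_nonneg (convPow_nonneg hμnn m) hνnn n
  have hcS : ∀ m, Summable (c m) ∧ ∑' n, c m n ≤ 1 := by
    intro m
    obtain ⟨hsum, hle⟩ := convPow_summable hμnn hμS hμsum.le m
    obtain ⟨hs', heq⟩ := seqConv_summable (convPow_nonneg hμnn m) hνnn hsum hνS
    refine ⟨hs', ?_⟩
    rw [hc, heq, hνsum, mul_one]; exact hle
  -- nonnegativity of α_k
  have hαnn : ∀ k, k ≤ K → ∀ n, 0 ≤ (fwd μ ν y ρ k).1 n := by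
    intro k
    induction k with
    | zero => intro _ n; simp [fwd]; positivity
    | succ k ih =>
      intro hkK n
      have ih' := ih (by omega)
      have hρk := hρ (k+1) (by omega) hkK
      have hρ0 : (0:ℝ) ≤ ρ (k+1) := hρk.1.le
      have hρ1 : (0:ℝ) ≤ 1 - ρ (k+1) := by linarith [hρk.2]
      show 0 ≤ (if y (k+1) ≤ n then _ else (0:ℝ))
      split
      · refine mul_nonneg (mul_nonneg (mul_nonneg ?_ ?_) ?_) ?_
        · positivity
        · positivity
        · positivity
        · exact tsum_nonneg fun m => mul_nonneg (ih' m) (hcnn m n)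
      · exact le_refl 0
  -- main claim for α by strong statement; then γ follows
  have key : ∀ k ≤ K, Summable (fwd μ ν y ρ k).1 ∧ ∑' n : ℕ, (fwd μ ν y ρ k).1 n ≤ 1 := by
    intro k
    induction k with
    | zero =>
      intro _
      constructor
      · refine summable_of_ne_finset_zero (s := {0}) ?_
        intro n hn
        simp only [Finset.mem_singleton] at hn
        simp [fwd, hn]
      · rw [show (fwd μ ν y ρ 0).1 = fun n => if n = 0 then (1:ℝ) else 0 from rfl,
          tsum_eq_single 0 (by intro n hn; simp [hn])]
        simp
    | succ k ih =>
      intro hkK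
      obtain ⟨hαS, hαle⟩ := ih (le_trans (Nat.le_succ k) hkK)
      have hαnnk : ∀ m, 0 ≤ (fwd μ ν y ρ k).1 m := hαnn k (by omega)
      set α := (fwd μ ν y ρ k).1
      set γ : ℕ → ℝ := fun n => ∑' m : ℕ, α m * c m n with hγ
      have hγeq : (fwd μ ν y ρ (k+1)).2 = γ := rfl
      -- for each n, m ↦ α m * c m n is summable
      have hinner : ∀ n, Summable fun m => α m * c m n := by
        intro n
        refine Summable.of_nonneg_of_le (fun m => mul_nonneg (hαnnk m) (hcnn m n))
          (fun m => ?_) hαS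
        have : c m n ≤ 1 := le_trans (Summable.le_tsum (hcS m).1 n fun j _ => hcnn m j) (hcS m).2
        calc α m * c m n ≤ α m * 1 := by
              exact mul_le_mul_of_nonneg_left this (hαnnk m)
          _ = α m := mul_one _
      have hγnn : ∀ n, 0 ≤ γ n := fun n =>
        tsum_nonneg fun m => mul_nonneg (hαnnk m) (hcnn m n)
      -- partial sums of γ bounded by 1
      have hpart : ∀ N, ∑ n ∈ Finset.range N, γ n ≤ 1 := by
        intro N
        have hswap : ∑ n ∈ Finset.range N, γ n
            = ∑' m, ∑ n ∈ Finset.range N, α m * c m n := by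
          rw [hγ]
          rw [← Summable.tsum_finsetSum (fun n _ => hinner n)]
        rw [hswap]
        have hsum2 : ∀ m, ∑ n ∈ Finset.range N, α m * c m n ≤ α m := by
          intro m
          rw [← Finset.mul_sum]
          have : ∑ n ∈ Finset.range N, c m n ≤ 1 :=
            le_trans (Summable.sum_le_tsum _ (fun j _ => hcnn m j) (hcS m).1) (hcS m).2
          calc α m * ∑ n ∈ Finset.range N, c m n ≤ α m * 1 :=
                mul_le_mul_of_nonneg_left this (hαnnk m)
            _ = α m := mul_one _
        calc ∑' m, ∑ n ∈ Finset.range N, α m * c m n ≤ ∑' m, α m := by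
              refine Summable.tsum_le_tsum hsum2 ?_ hαS
              refine Summable.of_nonneg_of_le
                (fun m => Finset.sum_nonneg fun n _ => mul_nonneg (hαnnk m) (hcnn m n))
                hsum2 hαS
          _ ≤ 1 := hαle
      have hγS : Summable γ := summable_of_sum_range_le hγnn hpart
      have hγle : ∑' n, γ n ≤ 1 := Summable.tsum_le_of_sum_range_le hγS hpart
      -- α_{k+1} ≤ γ pointwise
      have hρk := hρ (k+1) (Nat.le_add_left 1 k) hkK
      have hαle' : ∀ n, (fwd μ ν y ρ (k+1)).1 n ≤ γ n := by
        intro n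
        show (if y (k+1) ≤ n then _ else (0:ℝ)) ≤ γ n
        split
        case isTrue h =>
          have hcoef : (n.choose (y (k+1)) : ℝ) * ρ (k+1) ^ (y (k+1)) *
              (1 - ρ (k+1)) ^ (n - y (k+1)) ≤ 1 := by
            have hρ0 : (0:ℝ) ≤ ρ (k+1) := hρk.1.le
            have hρ1 : (0:ℝ) ≤ 1 - ρ (k+1) := by linarith [hρk.2]
            have hexp : ∑ i ∈ Finset.range (n+1),
                ρ (k+1) ^ i * (1 - ρ (k+1)) ^ (n - i) * (n.choose i : ℝ) = 1 := by
              rw [← add_pow]; norm_num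
            calc (n.choose (y (k+1)) : ℝ) * ρ (k+1) ^ (y (k+1)) *
                  (1 - ρ (k+1)) ^ (n - y (k+1))
                = ρ (k+1) ^ (y (k+1)) * (1 - ρ (k+1)) ^ (n - y (k+1)) *
                  (n.choose (y (k+1)) : ℝ) := by ring
              _ ≤ ∑ i ∈ Finset.range (n+1),
                  ρ (k+1) ^ i * (1 - ρ (k+1)) ^ (n - i) * (n.choose i : ℝ) := by
                  refine Finset.single_le_sum (f := fun i =>
                    ρ (k+1) ^ i * (1 - ρ (k+1)) ^ (n - i) * (n.choose i : ℝ))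
                    (fun i _ => by positivity) ?_
                  exact Finset.mem_range.mpr (Nat.lt_succ_of_le h)
              _ = 1 := hexp
          calc (n.choose (y (k+1)) : ℝ) * ρ (k+1) ^ (y (k+1)) *
                (1 - ρ (k+1)) ^ (n - y (k+1)) * γ n
              ≤ 1 * γ n := mul_le_mul_of_nonneg_right hcoef (hγnn n)
            _ = γ n := one_mul _
        case isFalse => exact hγnn n
      have hαS' : Summable (fwd μ ν y ρ (k+1)).1 :=
        Summable.of_nonneg_of_le (hαnn (k+1) hkK) hαle' hγS
      exact ⟨hαS', le_trans (Summable.tsum_le_tsum hαle' hαS' hγS) hγle⟩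
  refine ⟨key, ?_⟩
  intro k hk1 hkK
  obtain ⟨k, rfl⟩ : ∃ j, k = j + 1 := ⟨k - 1, by omega⟩
  obtain ⟨hαS, hαle⟩ := key k (by omega)
  have hαnnk : ∀ m, 0 ≤ (fwd μ ν y ρ k).1 m := hαnn k (by omega)
  set α := (fwd μ ν y ρ k).1
  have hinner : ∀ n, Summable fun m => α m * c m n := by
    intro n
    refine Summable.of_nonneg_of_le (fun m => mul_nonneg (hαnnk m) (hcnn m n))
      (fun m => ?_) hαS
    have : c m n ≤ 1 := le_trans (Summable.le_tsum (hcS m).1 n fun j _ => hcnn m j) (hcS m).2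
    calc α m * c m n ≤ α m * 1 := mul_le_mul_of_nonneg_left this (hαnnk m)
      _ = α m := mul_one _
  have hγnn : ∀ n, 0 ≤ (fwd μ ν y ρ (k+1)).2 n := fun n =>
    tsum_nonneg fun m => mul_nonneg (hαnnk m) (hcnn m n)
  have hpart : ∀ N, ∑ n ∈ Finset.range N, (fwd μ ν y ρ (k+1)).2 n ≤ 1 := by
    intro N
    have hswap : ∑ n ∈ Finset.range N, (fwd μ ν y ρ (k+1)).2 n
        = ∑' m, ∑ n ∈ Finset.range N, α m * c m n := by
      show ∑ n ∈ Finset.range N, (∑' m, α m * c m n) = _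
      rw [← Summable.tsum_finsetSum (fun n _ => hinner n)]
    rw [hswap]
    have hsum2 : ∀ m, ∑ n ∈ Finset.range N, α m * c m n ≤ α m := by
      intro m
      rw [← Finset.mul_sum]
      have : ∑ n ∈ Finset.range N, c m n ≤ 1 :=
        le_trans (Summable.sum_le_tsum _ (fun j _ => hcnn m j) (hcS m).1) (hcS m).2
      calc α m * ∑ n ∈ Finset.range N, c m n ≤ α m * 1 :=
            mul_le_mul_of_nonneg_left this (hαnnk m)
        _ = α m := mul_one _
    calc ∑' m, ∑ n ∈ Finset.range N, α m * c m n ≤ ∑' m, α m := by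
          refine Summable.tsum_le_tsum hsum2 ?_ hαS
          exact Summable.of_nonneg_of_le
            (fun m => Finset.sum_nonneg fun n _ => mul_nonneg (hαnnk m) (hcnn m n))
            hsum2 hαS
      _ ≤ 1 := hαle
  have hγS := summable_of_sum_range_le hγnn hpart
  exact ⟨hγS, Summable.tsum_le_of_sum_range_le hγS hpart⟩
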